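/- Let F be a field, H a finite subset of F with |H| = h, and k, d, m, l, t natural numbers with t > (m + l·d)·h^{k−1}. Let g : H^k → F be a function, let P ∈ F[x₁,…,x_k, y] be not identically zero with (1,…,1,d)-weighted degree at most m + l·d and P(a, g(a)) = 0 for all a ∈ H^k, and let f ∈ F[x₁,…,x_k] have total degree at most d. If f(a) = g(a) for at least t points a ∈ H^k, then the polynomial y − f(x₁,…,x_k) divides P(x₁,…,x_k, y) in F[x₁,…,x_k, y]. -/

import Mathlib

open MvPolynomial

lemma sz (F : Type*) [Field F] [DecidableEq F] (H : Finset F) :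
    ∀ (k : ℕ) (Q : MvPolynomial (Fin k) F), Q ≠ 0 →
    ((Fintype.piFinset fun _ : Fin k => H).filter fun a => eval a Q = 0).card * H.card ≤
      Q.totalDegree * H.card ^ k := by
  intro k
  induction k with
  | zero =>
    intro Q hQ
    obtain ⟨c, rfl⟩ := MvPolynomial.C_surjective (Fin 0) Q
    have hc : c ≠ 0 := fun h => hQ (by simp [h])
    have : ((Fintype.piFinset fun _ : Fin 0 => H).filter fun a => eval a (C c) = 0) = ∅ := by
      ext a; simp [hc]
    simp [this, hc]
  | succ k ih =>
    intro Q hQ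
    set q := finSuccEquiv F k Q with hqdef
    have hq : q ≠ 0 := by
      intro h; apply hQ; apply (finSuccEquiv F k).injective; simpa [hqdef] using h
    set n := q.natDegree with hndef
    have hlc : q.coeff n ≠ 0 := by
      rw [hndef, ← Polynomial.leadingCoeff]; exact Polynomial.leadingCoeff_ne_zero.mpr hq
    have hdeg : (q.coeff n).totalDegree + n ≤ Q.totalDegree :=
      totalDegree_coeff_finSuccEquiv_add_le Q n hlc
    set Z := (Fintype.piFinset fun _ : Fin (k+1) => H).filter fun a => eval a Q = 0 with hZdef
    -- fiberwise count over the tail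
    have hcount : Z.card = ∑ s ∈ (Fintype.piFinset fun _ : Fin k => H),
        (Z.filter fun a => Fin.tail a = s).card := by
      apply Finset.card_eq_sum_card_fiberwise
      intro a ha
      rw [hZdef, Finset.mem_coe, Finset.mem_filter] at ha
      exact Fintype.mem_piFinset.mpr fun i => Fintype.mem_piFinset.mp ha.1 _
    have hfiber : ∀ s ∈ (Fintype.piFinset fun _ : Fin k => H),
        (Z.filter fun a => Fin.tail a = s).card ≤
          if eval s (q.coeff n) = 0 then H.card else n := by
      intro s hs
      have hsub : (Z.filter fun a => Fin.tail a = s).card ≤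
          (H.filter fun y => Polynomial.eval y (Polynomial.map (eval s) q) = 0).card := by
        apply Finset.card_le_card_of_injOn (fun a => a 0)
        · intro a ha
          simp only [Finset.mem_coe, Finset.mem_filter, hZdef, Fintype.mem_piFinset] at ha
          obtain ⟨⟨ha1, ha2⟩, ha3⟩ := ha
          rw [Finset.mem_coe, Finset.mem_filter]
          refine ⟨ha1 0, ?_⟩
          rw [← eval_eq_eval_mv_eval', ← ha3, Fin.cons_self_tail]
          exact ha2
        · intro a ha b hb hab
          simp only [Finset.coe_filter, Set.mem_setOf_eq] at ha hb
          have := ha.2; have := hb.2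
          funext i
          refine Fin.cases ?_ ?_ i
          · exact hab
          · intro j
            have : Fin.tail a j = Fin.tail b j := by rw [ha.2, hb.2]
            exact this
      refine hsub.trans ?_
      split_ifs with h0
      · exact Finset.card_le_card (Finset.filter_subset _ _)
      · -- the univariate polynomial is nonzero of natDegree ≤ n
        set p := Polynomial.map (eval s) q with hpdef
        have hp0 : p ≠ 0 := by
          intro hp
          apply h0
          have : p.coeff n = 0 := by rw [hp]; simp
          simpa [hpdef, Polynomial.coeff_map] using this
        have hsubr : (H.filter fun y => Polynomial.eval y p = 0) ⊆ p.roots.toFinset := by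
          intro y hy
          rw [Finset.mem_filter] at hy
          rw [Multiset.mem_toFinset, Polynomial.mem_roots hp0]
          exact hy.2
        calc (H.filter fun y => Polynomial.eval y p = 0).card ≤ p.roots.toFinset.card :=
              Finset.card_le_card hsubr
          _ ≤ Multiset.card p.roots := Multiset.toFinset_card_le _
          _ ≤ p.natDegree := Polynomial.card_roots' p
          _ ≤ n := Polynomial.natDegree_map_le
    have hZle : Z.card ≤ ((Fintype.piFinset fun _ : Fin k => H).filter
          fun s => eval s (q.coeff n) = 0).card * H.card + H.card ^ k * n := by
      rw [hcount]
      calc ∑ s ∈ (Fintype.piFinset fun _ : Fin k => H), (Z.filter fun a => Fin.tail a = s).card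
          ≤ ∑ s ∈ (Fintype.piFinset fun _ : Fin k => H),
              (if eval s (q.coeff n) = 0 then H.card else n) := Finset.sum_le_sum hfiber
        _ ≤ _ := by
            rw [Finset.sum_ite]
            simp only [Finset.sum_const, smul_eq_mul]
            gcongr
            · calc ((Fintype.piFinset fun _ : Fin k => H).filter
                  fun s => ¬ eval s (q.coeff n) = 0).card
                  ≤ (Fintype.piFinset fun _ : Fin k => H).card := Finset.card_le_card (Finset.filter_subset _ _)
                _ = H.card ^ k := by simp [Fintype.card_piFinset]
    -- combine
    have hih := ih (q.coeff n) hlc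
    calc Z.card * H.card ≤ (((Fintype.piFinset fun _ : Fin k => H).filter
          fun s => eval s (q.coeff n) = 0).card * H.card + H.card ^ k * n) * H.card :=
          Nat.mul_le_mul_right _ hZle
      _ = ((Fintype.piFinset fun _ : Fin k => H).filter
          fun s => eval s (q.coeff n) = 0).card * H.card * H.card + n * H.card ^ (k+1) := by ring
      _ ≤ (q.coeff n).totalDegree * H.card ^ k * H.card + n * H.card ^ (k+1) := by
          gcongr
      _ = ((q.coeff n).totalDegree + n) * H.card ^ (k+1) := by ring
      _ ≤ Q.totalDegree * H.card ^ (k+1) := Nat.mul_le_mul_right _ hdeg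


lemma rot_castSucc (k : ℕ) (i : Fin k) : finRotate (k+1) i.castSucc = i.succ := by
  rw [finRotate_succ_apply, Fin.coeSucc_eq_succ]

lemma rot_last (k : ℕ) : finRotate (k+1) (Fin.last k) = 0 := finRotate_last

lemma finSuccEquiv_rename_succ (F : Type*) [Field F] (k : ℕ) (f : MvPolynomial (Fin k) F) :
    finSuccEquiv F k (rename Fin.succ f) = Polynomial.C f := by
  have : ((finSuccEquiv F k).toAlgHom.comp (rename (R := F) (Fin.succ (n := k)))) =
      ((Polynomial.CAlgHom (R := MvPolynomial (Fin k) F)).restrictScalars F) := by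
    apply MvPolynomial.algHom_ext
    intro i
    simp [Polynomial.CAlgHom, finSuccEquiv_X_succ]
  calc finSuccEquiv F k (rename Fin.succ f)
      = ((finSuccEquiv F k).toAlgHom.comp (rename Fin.succ)) f := rfl
    _ = Polynomial.C f := by rw [this]; rfl

lemma cons_comp_rot (F : Type*) (k : ℕ) (a : Fin k → F) (y : F) :
    (Fin.cons y a : Fin (k+1) → F) ∘ (finRotate (k+1)) = Fin.snoc a y := by
  funext i
  refine Fin.lastCases ?_ ?_ i
  · simp [rot_last]
  · intro j
    simp [rot_castSucc, Fin.snoc_castSucc]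

lemma coeff_weight_bound (F : Type*) [Field F] (k d : ℕ) (P : MvPolynomial (Fin (k+1)) F)
    (i : ℕ) (hi : (finSuccEquiv F k (rename (finRotate (k+1)) P)).coeff i ≠ 0) :
    ((finSuccEquiv F k (rename (finRotate (k+1)) P)).coeff i).totalDegree + d * i ≤
      P.weightedTotalDegree (Fin.snoc (fun _ : Fin k => 1) d) := by
  classical
  set c := (finSuccEquiv F k (rename (finRotate (k+1)) P)).coeff i with hc
  have hsup : c.support.Nonempty := by
    rwa [MvPolynomial.support_nonempty]
  obtain ⟨m', hm', hm'sup⟩ := Finset.exists_mem_eq_sup c.support hsup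
    (fun m => m.sum fun _ e => e)
  have hmem : m'.cons i ∈ (rename (finRotate (k+1)) P).support :=
    mem_support_coeff_finSuccEquiv.mp hm'
  rw [support_rename_of_injective (Equiv.injective _)] at hmem
  obtain ⟨u, hu, hueq⟩ := Finset.mem_image.mp hmem
  have hueq' : Finsupp.equivMapDomain (finRotate (k+1)) u = m'.cons i := by
    rw [← hueq, Finsupp.equivMapDomain_eq_mapDomain]
  have hu_apply : ∀ j, u j = (m'.cons i) (finRotate (k+1) j) := by
    intro j
    rw [← hueq']
    rw [Finsupp.equivMapDomain_apply, Equiv.symm_apply_apply]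
  have hw : Finsupp.weight (Fin.snoc (fun _ : Fin k => 1) d) u =
      (m'.sum fun _ e => e) + d * i := by
    rw [Finsupp.weight_apply, Finsupp.sum_fintype _ _ (fun j => by simp)]
    rw [Fin.sum_univ_castSucc]
    have h1 : ∀ j : Fin k, u j.castSucc •
        (Fin.snoc (fun _ : Fin k => 1) d : Fin (k+1) → ℕ) j.castSucc = m' j := by
      intro j
      rw [hu_apply, rot_castSucc, Fin.snoc_castSucc, Finsupp.cons_succ]
      simp
    have h2 : u (Fin.last k) • (Fin.snoc (fun _ : Fin k => 1) d : Fin (k+1) → ℕ)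
        (Fin.last k) = i * d := by
      rw [hu_apply, rot_last, Fin.snoc_last, Finsupp.cons_zero]
      simp [mul_comm]
    rw [Finset.sum_congr rfl (fun j _ => h1 j), h2]
    rw [Finsupp.sum_fintype _ _ (fun j => rfl)]
    ring
  calc c.totalDegree + d * i = (m'.sum fun _ e => e) + d * i := by
        rw [MvPolynomial.totalDegree, hm'sup]
    _ = Finsupp.weight _ u := hw.symm
    _ ≤ P.weightedTotalDegree _ := Finset.le_sup hu


/-- **Proposition 5.** Suppose `t > (m + l·d)·h^{k−1}` where `|H| = h`. If `P` is a nonzero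
polynomial in `F[x₁,…,x_k,y]` of `(1,…,1,d)`-weighted degree at most `m + l·d` vanishing at
`(a, g(a))` for all `a ∈ H^k`, and `f ∈ F[x₁,…,x_k]` has total degree at most `d` and
agrees with `g` on at least `t` points of `H^k`, then `y − f(x₁,…,x_k)` divides
`P(x₁,…,x_k,y)`. -/
theorem linear_factor_dvd_of_many_agreements_multivariate
    (F : Type*) [Field F] (H : Finset F) (h k d m l t : ℕ)
    (hH : H.card = h) (ht : t > (m + l * d) * h ^ (k - 1))
    (g : (Fin k → F) → F)
    (P : MvPolynomial (Fin (k + 1)) F) (hP0 : P ≠ 0)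
    (hPdeg : P.weightedTotalDegree (Fin.snoc (fun _ : Fin k => 1) d) ≤ m + l * d)
    (hPvan : ∀ a : Fin k → F, (∀ i, a i ∈ H) →
      MvPolynomial.eval (Fin.snoc a (g a)) P = 0)
    (f : MvPolynomial (Fin k) F) (hf : f.totalDegree ≤ d)
    (hagree : ∃ s : Finset (Fin k → F), t ≤ s.card ∧
      (∀ a ∈ s, ∀ i, a i ∈ H) ∧ ∀ a ∈ s, MvPolynomial.eval a f = g a) :
    (MvPolynomial.X (Fin.last k) - MvPolynomial.rename Fin.castSucc f) ∣ P := by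
  classical
  obtain ⟨s, hts, hsH, hsg⟩ := hagree
  set e := finRotate (k + 1) with hedef
  set q := finSuccEquiv F k (rename e P) with hqdef
  set Q0 := Polynomial.eval f q with hQ0def
  -- evaluation identity
  have heval : ∀ a : Fin k → F, eval a Q0 = eval (Fin.snoc a (eval a f)) P := by
    intro a
    have h1 : eval a Q0 = Polynomial.eval (eval a f) (Polynomial.map (eval a) q) := by
      rw [hQ0def, show (Polynomial.eval f q) = q.eval₂ (RingHom.id _) f from rfl,
        Polynomial.hom_eval₂, RingHom.comp_id, Polynomial.eval₂_eq_eval_map]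
    rw [h1, hqdef, ← eval_eq_eval_mv_eval', eval_rename, cons_comp_rot]
  -- degree bound
  have hQ0deg : Q0.totalDegree ≤ m + l * d := by
    rw [hQ0def, Polynomial.eval_eq_sum, Polynomial.sum_def]
    apply totalDegree_finsetSum_le
    intro i hi
    have hi' : q.coeff i ≠ 0 := Polynomial.mem_support_iff.mp hi
    have hb := coeff_weight_bound F k d P i hi'
    calc (q.coeff i * f ^ i).totalDegree ≤ (q.coeff i).totalDegree + (f ^ i).totalDegree :=
          totalDegree_mul _ _
      _ ≤ (q.coeff i).totalDegree + i * f.totalDegree :=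
          Nat.add_le_add_left (totalDegree_pow f i) _
      _ ≤ (q.coeff i).totalDegree + d * i := by
          rw [mul_comm d i]; exact Nat.add_le_add_left (Nat.mul_le_mul_left i hf) _
      _ ≤ P.weightedTotalDegree (Fin.snoc (fun _ : Fin k => 1) d) := hb
      _ ≤ m + l * d := hPdeg
  -- vanishing on s
  have hzero : ∀ a ∈ s, eval a Q0 = 0 := by
    intro a ha
    rw [heval a, hsg a ha]
    exact hPvan a (hsH a ha)
  -- Q0 = 0
  have hQ0z : Q0 = 0 := by
    by_contra hne
    have ht1 : 1 ≤ t := Nat.one_le_iff_ne_zero.mpr (by omega)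
    have hsne : s.Nonempty := Finset.card_pos.mp (lt_of_lt_of_le ht1 hts)
    obtain ⟨a, ha⟩ := hsne
    rcases Nat.eq_zero_or_pos k with hk | hk
    · subst hk
      obtain ⟨c, hc⟩ := MvPolynomial.C_surjective (Fin 0) Q0
      have : c = 0 := by
        have := hzero a ha
        rw [← hc] at this
        simpa using this
      exact hne (by rw [← hc, this, map_zero])
    · obtain ⟨k', rfl⟩ : ∃ k', k = k' + 1 := ⟨k - 1, by omega⟩
      have hh : 0 < h := by
        rcases Nat.eq_zero_or_pos h with h0 | h0
        · exfalso
          have hHe : H = ∅ := Finset.card_eq_zero.mp (hH.trans h0)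
          exact absurd (hsH a ha 0) (by simp [hHe])
        · exact h0
      have hsub : s ⊆ (Fintype.piFinset fun _ : Fin (k'+1) => H).filter
          fun a => eval a Q0 = 0 := by
        intro b hb
        rw [Finset.mem_filter]
        exact ⟨Fintype.mem_piFinset.mpr (hsH b hb), hzero b hb⟩
      have hcard := sz F H (k'+1) Q0 hne
      have : t * h ≤ (m + l * d) * h ^ (k' + 1) := by
        calc t * h ≤ s.card * H.card := by rw [hH]; exact Nat.mul_le_mul_right _ hts
          _ ≤ ((Fintype.piFinset fun _ : Fin (k'+1) => H).filter
              fun a => eval a Q0 = 0).card * H.card :=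
            Nat.mul_le_mul_right _ (Finset.card_le_card hsub)
          _ ≤ Q0.totalDegree * H.card ^ (k'+1) := hcard
          _ ≤ (m + l * d) * h ^ (k'+1) := by rw [hH]; exact Nat.mul_le_mul_right _ hQ0deg
      have : t * h < t * h := by
        calc t * h ≤ (m + l * d) * h ^ (k' + 1) := this
          _ = (m + l * d) * h ^ k' * h := by ring
          _ < t * h := Nat.mul_lt_mul_of_pos_right (by simpa using ht) hh
      omega
  -- transfer divisibility
  have hdvd : (Polynomial.X - Polynomial.C f) ∣ q := Polynomial.dvd_iff_isRoot.mpr hQ0z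
  have h2 := map_dvd (rename (R := F) ⇑e.symm) (map_dvd (finSuccEquiv F k).symm hdvd)
  have hrhs : rename (R := F) ⇑e.symm ((finSuccEquiv F k).symm q) = P := by
    rw [hqdef, AlgEquiv.symm_apply_apply, rename_rename]
    have : (⇑e.symm ∘ ⇑e) = id := by funext x; simp
    rw [this, rename_id, AlgHom.id_apply]
  have hlhs : rename (R := F) ⇑e.symm ((finSuccEquiv F k).symm (Polynomial.X - Polynomial.C f)) =
      X (Fin.last k) - rename Fin.castSucc f := by
    rw [map_sub, map_sub]
    congr 1
    · have hx : (finSuccEquiv F k).symm Polynomial.X = X 0 := by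
        rw [← finSuccEquiv_X_zero (R := F) (n := k), AlgEquiv.symm_apply_apply]
      rw [hx, rename_X]
      have : e.symm 0 = Fin.last k := by
        rw [Equiv.symm_apply_eq, hedef, rot_last]
      rw [this]
    · have hc : (finSuccEquiv F k).symm (Polynomial.C f) = rename Fin.succ f := by
        rw [← finSuccEquiv_rename_succ F k f, AlgEquiv.symm_apply_apply]
      have hcomp : (⇑e.symm ∘ Fin.succ : Fin k → Fin (k+1)) = Fin.castSucc := by
        funext i
        rw [hedef]
        simp only [Function.comp_apply]
        rw [← rot_castSucc k i]
        exact Equiv.symm_apply_apply _ _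
      rw [hc, rename_rename, hcomp]
  rw [hrhs, hlhs] at h2
  exact h2
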